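/- arXiv:1708.05726 — 2 statements merged into one kernel-verified Lean document; each statement's English description precedes it below -/
import Mathlib

section
/- Let S, E : ℝ → [0,∞) be differentiable and satisfy S'(t) + E'(t) ≤ A - μ(S(t) + E(t)) for all t ∈ ℝ, with S + E bounded on ℝ. Then S(t) + E(t) ≤ A/μ for all t ∈ ℝ. -/
theorem stmt_7 (A μ : ℝ) (hA : 0 < A) (hμ : 0 < μ) (S E : ℝ → ℝ)
    (hSd : Differentiable ℝ S) (hEd : Differentiable ℝ E)
    (hpos : ∀ t, 0 ≤ S t ∧ 0 ≤ E t)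
    (hineq : ∀ t, deriv S t + deriv E t ≤ A - μ * (S t + E t))
    (hbdd : ∃ M, ∀ t, S t + E t ≤ M) :
    ∀ t, S t + E t ≤ A / μ := by
  obtain ⟨M, hM⟩ := hbdd
  set g : ℝ → ℝ := fun t => (S t + E t - A / μ) * Real.exp (μ * t) with hg
  have hNd : Differentiable ℝ (fun t => S t + E t) := hSd.add hEd
  have hgd : Differentiable ℝ g := by
    apply Differentiable.mul
    · exact hNd.sub_const _
    · exact (Real.differentiable_exp.comp (differentiable_const μ |>.mul differentiable_id))
  have hderiv : ∀ x, HasDerivAt g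
      ((deriv S x + deriv E x) * Real.exp (μ * x)
        + (S x + E x - A / μ) * (μ * Real.exp (μ * x))) x := by
    intro x
    have h1 : HasDerivAt (fun t => S t + E t - A / μ) (deriv S x + deriv E x) x :=
      (((hSd x).hasDerivAt).add ((hEd x).hasDerivAt)).sub_const _
    have h2 : HasDerivAt (fun t => Real.exp (μ * t)) (μ * Real.exp (μ * x)) x := by
      have := (Real.hasDerivAt_exp (μ * x)).comp x
        ((hasDerivAt_id x).const_mul μ)
      simpa [mul_comm, Function.comp_def] using this
    exact h1.mul h2
  have hg' : ∀ x, deriv g x ≤ 0 := by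
    intro x
    rw [(hderiv x).deriv]
    have h := hineq x
    have hexp : 0 < Real.exp (μ * x) := Real.exp_pos _
    have key : (deriv S x + deriv E x) + (S x + E x - A / μ) * μ ≤ 0 := by
      have : (S x + E x - A / μ) * μ = μ * (S x + E x) - A := by
        field_simp
      rw [this]; linarith
    nlinarith [hexp.le, mul_nonneg (neg_nonneg.mpr key) hexp.le]
  have hanti : Antitone g := antitone_of_deriv_nonpos hgd hg'
  intro t₀
  by_contra h
  push_neg at h
  set c := S t₀ + E t₀ - A / μ with hc
  have hcpos : 0 < c := by simp [hc]; linarith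
  set K := max 1 ((M - A / μ) / c) with hK
  have hK1 : (1 : ℝ) ≤ K := le_max_left _ _
  have hKpos : 0 < K := lt_of_lt_of_le one_pos hK1
  set r := (Real.log K + 1) / μ with hr
  have hlogK : 0 ≤ Real.log K := Real.log_nonneg hK1
  have hrpos : 0 < r := by positivity
  have hexp_r : K < Real.exp (μ * r) := by
    have : μ * r = Real.log K + 1 := by rw [hr]; field_simp
    rw [this, Real.exp_add, Real.exp_log hKpos]
    nlinarith [Real.exp_one_gt_d9]
  set s := t₀ - r with hs
  have hst : s ≤ t₀ := by linarith
  have hg_le : g t₀ ≤ g s := hanti hst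
  have hexps : 0 < Real.exp (μ * s) := Real.exp_pos _
  have hNs : c * Real.exp (μ * r) ≤ S s + E s - A / μ := by
    have hgle : c * Real.exp (μ * t₀) ≤ (S s + E s - A / μ) * Real.exp (μ * s) := hg_le
    have hratio : Real.exp (μ * t₀) / Real.exp (μ * s) = Real.exp (μ * r) := by
      rw [← Real.exp_sub]; congr 1; simp [hs]; ring
    have := (div_le_iff₀ hexps).mpr hgle
    calc c * Real.exp (μ * r) = c * Real.exp (μ * t₀) / Real.exp (μ * s) := by
          rw [mul_div_assoc, hratio]
      _ ≤ S s + E s - A / μ := this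
  have hKge : (M - A / μ) / c ≤ K := le_max_right _ _
  have : M - A / μ < c * Real.exp (μ * r) := by
    have h1 : M - A / μ ≤ c * K := by
      rw [div_le_iff₀ hcpos] at hKge
      linarith [hKge]
    nlinarith
  have hcontra : M < S s + E s := by linarith
  exact absurd (hM s) (not_le.mpr hcontra)
end

section
/- Let H(y) = y - ln y - 1, let f be an incidence function satisfying: for fixed S and J* > 0, x < J* implies x/J* < f(S,x)/f(S,J*) < 1 and x > J* implies 1 < f(S,x)/f(S,J*) < x/J*. Then for any J > 0 with J ≠ J* (and also J = J*), H(f(S,J)/f(S,J*)) ≤ H(J/J*). -/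
lemma Hdec (a b : ℝ) (ha : 0 < a) (hab : a ≤ b) (hb1 : b ≤ 1) :
    b - Real.log b - 1 ≤ a - Real.log a - 1 := by
  have hb : 0 < b := lt_of_lt_of_le ha hab
  have h := Real.log_le_sub_one_of_pos (x := a / b) (div_pos ha hb)
  rw [Real.log_div ha.ne' hb.ne'] at h
  have h2 : a / b - 1 ≤ a - b := by
    rw [div_sub_one hb.ne']
    rw [div_le_iff₀ hb]
    nlinarith
  nlinarith

lemma Hinc (a b : ℝ) (ha : 1 ≤ a) (hab : a ≤ b) :
    a - Real.log a - 1 ≤ b - Real.log b - 1 := by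
  have ha0 : 0 < a := lt_of_lt_of_le one_pos ha
  have hb : 0 < b := lt_of_lt_of_le ha0 hab
  have h := Real.log_le_sub_one_of_pos (x := b / a) (div_pos hb ha0)
  rw [Real.log_div hb.ne' ha0.ne'] at h
  have h2 : b / a - 1 ≤ b - a := by
    rw [div_sub_one ha0.ne', div_le_iff₀ ha0]
    nlinarith
  nlinarith

theorem stmt_10 (f : ℝ → ℝ → ℝ) (S Jstar : ℝ) (hJstar : 0 < Jstar)
    (hpos : ∀ J, 0 < J → 0 < f S J)
    (h1 : ∀ x, 0 < x → x < Jstar →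
      x / Jstar < f S x / f S Jstar ∧ f S x / f S Jstar < 1)
    (h2 : ∀ x, Jstar < x →
      1 < f S x / f S Jstar ∧ f S x / f S Jstar < x / Jstar) :
    ∀ J, 0 < J →
      f S J / f S Jstar - Real.log (f S J / f S Jstar) - 1
        ≤ J / Jstar - Real.log (J / Jstar) - 1 := by
  intro J hJ
  rcases lt_trichotomy J Jstar with hlt | heq | hgt
  · obtain ⟨ha, hb⟩ := h1 J hJ hlt
    exact Hdec (J / Jstar) (f S J / f S Jstar) (div_pos hJ hJstar) ha.le hb.le
  · subst heq
    simp [div_self (hpos J hJ).ne', div_self hJ.ne']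
  · obtain ⟨ha, hb⟩ := h2 J hgt
    exact Hinc (f S J / f S Jstar) (J / Jstar) ha.le hb.le
end
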